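/- arXiv:1902.02094 — 2 statements merged into one kernel-verified Lean document; each statement's English description precedes it below -/
import Mathlib

section
/- There exist a decreasing function Ψ : ℕ → (0,∞) tending to 0 and an increasing continuous function g : [0,∞) → [0,∞) with g(0)=0 such that the series ∑_{k≥1} 2^{3k} g(Ψ(2^k)/2^k) converges while the series ∑_{k≥1} 2^k g(√(Ψ(2^k))/2^{k/2}) diverges. -/
open Filter

noncomputable def vv (j : ℕ) : ℝ := (1/2 : ℝ) ^ (3 * 4 ^ j + 1)
noncomputable def rr (j : ℕ) (x : ℝ) : ℝ := min 1 (max 0 (x / vv j - 1))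
noncomputable def cc (j : ℕ) : ℝ := (1/2 : ℝ) ^ (4 ^ (j+1) - 1)
noncomputable def gg (x : ℝ) : ℝ := ∑' j, cc j * rr j x
def aa (m : ℕ) : ℕ := 2 * 4 ^ (Nat.log 4 m)
noncomputable def Psi (q : ℕ) : ℝ := (1/2 : ℝ) ^ (aa (Nat.log 2 q))

lemma half_pow_anti {m n : ℕ} (h : m ≤ n) : (1/2:ℝ)^n ≤ (1/2:ℝ)^m :=
  pow_le_pow_of_le_one (by norm_num) (by norm_num) h

lemma vv_pos (j : ℕ) : 0 < vv j := by unfold vv; positivity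

lemma vv_anti {j k : ℕ} (h : j ≤ k) : vv k ≤ vv j :=
  half_pow_anti (by have := Nat.pow_le_pow_right (by norm_num : 1 ≤ 4) h; omega)

lemma cc_pos (j : ℕ) : 0 < cc j := by unfold cc; positivity

lemma rr_nonneg (j : ℕ) (x : ℝ) : 0 ≤ rr j x :=
  le_min one_pos.le (le_max_left _ _)

lemma rr_le_one (j : ℕ) (x : ℝ) : rr j x ≤ 1 := min_le_left _ _

lemma rr_mono (j : ℕ) : Monotone (rr j) := by
  have h : Monotone fun x : ℝ => x / vv j - 1 := fun x y h => by
    have h2 : x / vv j ≤ y / vv j := by gcongr; exact (vv_pos j).le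
    linarith
  exact monotone_const.min (monotone_const.max h)

lemma rr_continuous (j : ℕ) : Continuous (rr j) := by
  unfold rr
  fun_prop

lemma rr_eq_zero {j : ℕ} {x : ℝ} (h : x ≤ vv j) : rr j x = 0 := by
  have h1 : x / vv j - 1 ≤ 0 := by
    have := (div_le_one (vv_pos j)).2 h
    linarith
  simp [rr, max_eq_left h1]

lemma rr_eq_one {j : ℕ} {x : ℝ} (h : 2 * vv j ≤ x) : rr j x = 1 := by
  have h1 : (1:ℝ) ≤ x / vv j - 1 := by
    rw [le_sub_iff_add_le, le_div_iff₀ (vv_pos j)]; linarith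
  have h2 : (1:ℝ) ≤ max 0 (x / vv j - 1) := le_trans h1 (le_max_right _ _)
  simp [rr, min_eq_left h2]

lemma cc_le_geom (j : ℕ) : cc j ≤ (1/2:ℝ)^j := half_pow_anti (by
  have := Nat.lt_pow_self (by norm_num : 1 < 4) (n := j)
  omega)

lemma summable_cc : Summable cc :=
  Summable.of_nonneg_of_le (fun j => (cc_pos j).le) cc_le_geom
    (summable_geometric_of_lt_one (by norm_num) (by norm_num))

lemma summable_cr (x : ℝ) : Summable fun j => cc j * rr j x :=
  Summable.of_nonneg_of_le (fun j => mul_nonneg (cc_pos j).le (rr_nonneg j x))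
    (fun j => by nlinarith [rr_le_one j x, cc_pos j, rr_nonneg j x]) summable_cc

lemma gg_nonneg (x : ℝ) : 0 ≤ gg x :=
  tsum_nonneg fun j => mul_nonneg (cc_pos j).le (rr_nonneg j x)

lemma gg_zero : gg 0 = 0 := by
  have h : ∀ j : ℕ, cc j * rr j 0 = 0 := by
    intro j
    have : rr j 0 = 0 := rr_eq_zero (vv_pos j).le
    simp [this]
  simp [gg, h]

lemma gg_mono : Monotone gg := by
  intro x y h
  exact Summable.tsum_le_tsum (fun j => mul_le_mul_of_nonneg_left (rr_mono j h) (cc_pos j).le)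
    (summable_cr x) (summable_cr y)

lemma gg_continuous : Continuous gg := by
  apply continuous_tsum (f := fun j x => cc j * rr j x) (u := cc)
    (fun j => (continuous_const.mul (rr_continuous j))) summable_cc
  intro j x
  rw [Real.norm_eq_abs, abs_of_nonneg (mul_nonneg (cc_pos j).le (rr_nonneg j x))]
  nlinarith [rr_le_one j x, cc_pos j, rr_nonneg j x]

lemma gg_ge {j : ℕ} {x : ℝ} (h : 2 * vv j ≤ x) : cc j ≤ gg x := by
  have := Summable.le_tsum (summable_cr x) j
    (fun i _ => mul_nonneg (cc_pos i).le (rr_nonneg i x))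
  rw [rr_eq_one h, mul_one] at this
  exact this

lemma pow4_ge (i L : ℕ) : 4^(L+1) + i ≤ 4^(i+L+1) := by
  have h1 : i < 4^i := Nat.lt_pow_self (by norm_num : 1 < 4) (n := i)
  have h2 : 0 < 4^(L+1) := Nat.pow_pos (by norm_num)
  have h3 : 4^(i+L+1) = 4^i * 4^(L+1) := by ring
  nlinarith

lemma cc_tail (L i : ℕ) : cc (i + L) ≤ cc L * (1/2:ℝ)^i := by
  unfold cc
  rw [← pow_add]
  apply half_pow_anti
  have h1 := pow4_ge i L
  have h2 : 1 ≤ 4^L := Nat.one_le_pow _ _ (by norm_num)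
  omega

lemma gg_le {x : ℝ} (L : ℕ) (h : ∀ j < L, rr j x = 0) : gg x ≤ 2 * cc L := by
  have hdle : ∀ j, (if j < L then 0 else cc j) ≤ cc j := fun j => by
    by_cases hj : j < L <;> simp [hj, (cc_pos j).le]
  have hdnn : ∀ j, 0 ≤ (if j < L then 0 else cc j) := fun j => by
    by_cases hj : j < L <;> simp [hj, (cc_pos j).le]
  have hsd : Summable (fun j => if j < L then 0 else cc j) :=
    Summable.of_nonneg_of_le hdnn hdle summable_cc
  have h1 : gg x ≤ ∑' j, (if j < L then 0 else cc j) := by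
    refine Summable.tsum_le_tsum (fun j => ?_) (summable_cr x) hsd
    by_cases hj : j < L
    · simp [hj, h j hj]
    · simp only [hj, if_false]
      nlinarith [rr_le_one j x, rr_nonneg j x, cc_pos j]
  have h2 : ∑' j, (if j < L then 0 else cc j) = ∑' i, cc (i + L) := by
    rw [← Summable.sum_add_tsum_nat_add L hsd]
    have hz : ∀ i ∈ Finset.range L, (if i < L then (0:ℝ) else cc i) = 0 := fun i hi => by
      simp [Finset.mem_range.mp hi]
    rw [Finset.sum_eq_zero hz, zero_add]
    congr 1
    funext i
    simp [Nat.not_lt.mpr (Nat.le_add_left L i)]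
  have hs2 : Summable (fun i : ℕ => cc L * (1/2:ℝ)^i) :=
    (summable_geometric_of_lt_one (by norm_num) (by norm_num)).mul_left _
  have h3 : ∑' i, cc (i + L) ≤ ∑' i : ℕ, cc L * (1/2:ℝ)^i :=
    Summable.tsum_le_tsum (fun i => cc_tail L i) ((summable_nat_add_iff L).mpr summable_cc) hs2
  have h4 : ∑' i : ℕ, cc L * (1/2:ℝ)^i = cc L * 2 := by
    rw [tsum_mul_left, tsum_geometric_of_lt_one (by norm_num) (by norm_num)]
    norm_num
  linarith

lemma pow_half_mul (t : ℕ) : (2:ℝ)^t * (1/2:ℝ)^t = 1 := by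
  rw [← mul_pow]; norm_num

lemma comp_eq (n : ℕ) :
    (2:ℝ)^(3*(n+1)) * (2*(1/2:ℝ)^(4*(n+1)-1)) = 4*(1/2:ℝ)^(n+1) := by
  have h1 : 4*(n+1)-1 = 3*(n+1)+n := by omega
  rw [h1, pow_add, pow_succ]
  have k1 := pow_half_mul (3*(n+1))
  nlinarith [pow_pos (by norm_num : (0:ℝ) < 1/2) n]

lemma x_eq (m : ℕ) : Psi (2^m) / (2:ℝ)^m = (1/2:ℝ)^(aa m + m) := by
  unfold Psi
  rw [Nat.log_pow (by norm_num : 1 < 2), pow_add]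
  rw [div_eq_mul_inv, one_div, inv_pow, inv_pow]

lemma A_bound (m : ℕ) (hm : 1 ≤ m) :
    (2:ℝ)^(3*m) * gg ((1/2:ℝ)^(aa m + m)) ≤ 4 * (1/2:ℝ)^m := by
  set L := Nat.log 4 m with hL
  have h4L : 4^L ≤ m := Nat.pow_log_le_self 4 (by omega)
  have hm4 : m < 4^(L+1) := Nat.lt_pow_succ_log_self (by norm_num) m
  have haa : aa m = 2 * 4^L := rfl
  obtain ⟨n, hn⟩ : ∃ n, m = n + 1 := ⟨m - 1, by omega⟩
  have key : ∀ E : ℕ, 4*m - 1 ≤ E → gg ((1/2:ℝ)^(aa m + m)) ≤ 2 * (1/2:ℝ)^E →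
      (2:ℝ)^(3*m) * gg ((1/2:ℝ)^(aa m + m)) ≤ 4 * (1/2:ℝ)^m := by
    intro E hE hgg
    have h1 : (2:ℝ)^(3*m) * gg ((1/2:ℝ)^(aa m + m)) ≤ (2:ℝ)^(3*m) * (2*(1/2:ℝ)^(4*m-1)) := by
      have h2 : (1/2:ℝ)^E ≤ (1/2:ℝ)^(4*m-1) := half_pow_anti hE
      have h3 : (0:ℝ) < 2^(3*m) := by positivity
      nlinarith
    calc (2:ℝ)^(3*m) * gg ((1/2:ℝ)^(aa m + m)) ≤ (2:ℝ)^(3*m) * (2*(1/2:ℝ)^(4*m-1)) := h1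
      _ = 4 * (1/2:ℝ)^m := by rw [hn]; exact comp_eq n
  by_cases hc : m = 4^L
  · apply key (4^(L+1)-1)
    · have : 4^(L+1) = 4*4^L := by ring
      omega
    · have hz : ∀ j < L, rr j ((1/2:ℝ)^(aa m + m)) = 0 := by
        intro j hj
        apply rr_eq_zero
        unfold vv
        apply half_pow_anti
        rw [haa]
        have hp : 4^j * 4 ≤ 4^L := by
          have h5 := Nat.pow_le_pow_right (by norm_num : 1 ≤ 4) (show j+1 ≤ L by omega)
          rw [pow_succ] at h5
          exact h5
        have hp1 : 1 ≤ 4^j := Nat.one_le_pow _ _ (by norm_num)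
        omega
      have := gg_le L hz
      unfold cc at this
      exact this
  · apply key (4^(L+2)-1)
    · have h1 : 4^(L+2) = 4*4^(L+1) := by ring
      omega
    · have hz : ∀ j < L+1, rr j ((1/2:ℝ)^(aa m + m)) = 0 := by
        intro j hj
        apply rr_eq_zero
        unfold vv
        apply half_pow_anti
        rw [haa]
        have hp : 4^j ≤ 4^L := Nat.pow_le_pow_right (by norm_num : 1 ≤ 4) (by omega)
        have hp1 : 1 ≤ 4^L := Nat.one_le_pow _ _ (by norm_num)
        omega
      have := gg_le (L+1) hz
      unfold cc at this
      exact this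

lemma half_pow_rpow (n : ℕ) : (1/2:ℝ)^n = (2:ℝ)^(-(n:ℝ)) := by
  rw [Real.rpow_neg (by norm_num), Real.rpow_natCast, one_div, inv_pow]

lemma B_ge (N : ℕ) :
    1 ≤ (2:ℝ)^((4^(N+1)-2) + 1) *
      gg (Real.sqrt (Psi (2^((4^(N+1)-2) + 1))) /
        (2:ℝ)^((((4^(N+1)-2 : ℕ):ℝ) + 1)/2)) := by
  have h4 : 4 ≤ 4^(N+1) := by
    calc 4 = 4^1 := by norm_num
    _ ≤ 4^(N+1) := Nat.pow_le_pow_right (by norm_num) (by omega)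
  set m : ℕ := (4^(N+1)-2) + 1 with hm
  have hm' : m = 4^(N+1) - 1 := by omega
  have hlog : Nat.log 4 m = N := by
    apply Nat.log_eq_of_pow_le_of_lt_pow
    · have : 4^N ≤ 4^(N+1) := Nat.pow_le_pow_right (by norm_num) (by omega)
      have h1 : 4^(N+1) = 4*4^N := by ring
      omega
    · omega
  have haa : aa m = 2 * 4^N := by rw [aa, hlog]
  have hpsi : Psi (2^m) = (1/2:ℝ)^(2*4^N) := by
    rw [Psi, Nat.log_pow (by norm_num : 1 < 2), haa]
  have hsqrt : Real.sqrt (Psi (2^m)) = (1/2:ℝ)^(4^N) := by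
    rw [hpsi, show 2*4^N = 4^N*2 by ring, pow_mul]
    exact Real.sqrt_sq (by positivity)
  have harg : 2 * vv N ≤ Real.sqrt (Psi (2^m)) / (2:ℝ)^((((4^(N+1)-2 : ℕ):ℝ) + 1)/2) := by
    have hvN : 2 * vv N = (1/2:ℝ)^(3*4^N) := by
      rw [vv, pow_succ]
      ring
    rw [hvN, hsqrt, half_pow_rpow, half_pow_rpow, div_eq_mul_inv,
      ← Real.rpow_neg (by norm_num : (0:ℝ) ≤ 2), ← Real.rpow_add (by norm_num : (0:ℝ) < 2)]
    apply (Real.rpow_le_rpow_left_iff (by norm_num : (1:ℝ) < 2)).mpr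
    rw [Nat.cast_sub (show 2 ≤ 4^(N+1) by omega)]
    push_cast
    have h5 : (4:ℝ)^(N+1) = 4*4^N := by ring
    linarith
  have hterm := gg_ge harg
  have hcc : cc N = (1/2:ℝ)^(4^(N+1)-1) := rfl
  calc (1:ℝ) = (2:ℝ)^((4^(N+1)-2)+1) * (1/2:ℝ)^(4^(N+1)-1) := by
        rw [show (4^(N+1)-2)+1 = 4^(N+1)-1 by omega, pow_half_mul]
    _ ≤ _ := by
        have h2 : (0:ℝ) < 2^((4^(N+1)-2)+1) := by positivity
        rw [← hcc]
        exact mul_le_mul_of_nonneg_left (hcc ▸ hterm) h2.le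

lemma psi_pos (q : ℕ) : 0 < Psi q := by unfold Psi; positivity

lemma aa_mono : Monotone aa := fun x y h =>
  Nat.mul_le_mul_left 2 (Nat.pow_le_pow_right (by norm_num) (Nat.log_mono_right h))

lemma psi_anti : Antitone Psi := fun q q' h =>
  half_pow_anti (aa_mono (Nat.log_mono_right h))

lemma psi_tendsto : Filter.Tendsto Psi Filter.atTop (nhds 0) := by
  have h1 : Tendsto (fun q => aa (Nat.log 2 q)) atTop atTop := by
    apply tendsto_atTop_atTop.mpr
    intro b
    refine ⟨2^(4^b), fun q hq => ?_⟩
    have hl : 4^b ≤ Nat.log 2 q := by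
      have := Nat.log_mono_right (b := 2) hq
      rwa [Nat.log_pow (by norm_num : 1 < 2)] at this
    have hl2 : b ≤ Nat.log 4 (Nat.log 2 q) := by
      have := Nat.log_mono_right (b := 4) hl
      rwa [Nat.log_pow (by norm_num : 1 < 4)] at this
    calc b ≤ 4^b := (Nat.lt_pow_self (by norm_num : 1 < 4) (n := b)).le
      _ ≤ 4^(Nat.log 4 (Nat.log 2 q)) := Nat.pow_le_pow_right (by norm_num) hl2
      _ ≤ aa (Nat.log 2 q) := by unfold aa; omega
  have h2 := (tendsto_pow_atTop_nhds_zero_of_lt_one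
    (by norm_num : (0:ℝ) ≤ 1/2) (by norm_num : (1/2:ℝ) < 1)).comp h1
  exact h2

theorem stmt_2 :
    ∃ (Ψ : ℕ → ℝ) (g : ℝ → ℝ),
      (∀ q : ℕ, 0 < Ψ q) ∧ Antitone Ψ ∧
      Filter.Tendsto Ψ Filter.atTop (nhds 0) ∧
      (∀ x : ℝ, 0 ≤ x → 0 ≤ g x) ∧
      MonotoneOn g (Set.Ici 0) ∧ ContinuousOn g (Set.Ici 0) ∧ g 0 = 0 ∧
      Summable (fun k : ℕ => (2:ℝ) ^ (3 * (k + 1)) * g (Ψ (2 ^ (k + 1)) / 2 ^ (k + 1))) ∧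
      ¬ Summable (fun k : ℕ =>
        (2:ℝ) ^ (k + 1) * g (Real.sqrt (Ψ (2 ^ (k + 1))) / (2:ℝ) ^ (((k:ℝ) + 1) / 2))) := by
  refine ⟨Psi, gg, psi_pos, psi_anti, psi_tendsto,
    fun x _ => gg_nonneg x, gg_mono.monotoneOn _, gg_continuous.continuousOn, gg_zero, ?_, ?_⟩
  · -- summability of the first series
    apply Summable.of_nonneg_of_le (f := fun k : ℕ => 4*(1/2:ℝ)^k)
    · intro k
      exact mul_nonneg (by positivity) (gg_nonneg _)
    · intro k
      rw [x_eq (k+1)]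
      calc (2:ℝ)^(3*(k+1)) * gg ((1/2:ℝ)^(aa (k+1) + (k+1))) ≤ 4*(1/2:ℝ)^(k+1) :=
            A_bound (k+1) (by omega)
        _ ≤ 4*(1/2:ℝ)^k := by
            have := half_pow_anti (show k ≤ k+1 by omega)
            linarith
    · exact (summable_geometric_of_lt_one (by norm_num) (by norm_num)).mul_left 4
  · -- non-summability of the second series
    intro hs
    have h0 := hs.tendsto_atTop_zero
    have h1 := h0.eventually_lt_const (one_pos : (0:ℝ) < 1)
    obtain ⟨K, hK⟩ := eventually_atTop.mp h1
    have hk0 : K ≤ 4^(K+1) - 2 := by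
      have h2 : K+1 < 2^(K+1) := Nat.lt_two_pow_self
      have h3 : 2^(K+1) ≤ 4^(K+1) := Nat.pow_le_pow_left (by norm_num) _
      omega
    exact absurd (B_ge K) (not_le.mpr (hK _ hk0))
end

section
/- Gelfond's lemma: for any positive integer n there exist constants c₁(n), c₂(n) > 0 such that for any finite collection of nonzero integer polynomials P₁, …, P_k whose product has degree at most n, one has c₁(n) · H_{P₁} ⋯ H_{P_k} ≤ H_{P₁⋯P_k} ≤ c₂(n) · H_{P₁} ⋯ H_{P_k}. -/
open Polynomial Finset

/-- Height of an integer polynomial: max absolute value of its coefficients. -/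
def polyHeight (P : Polynomial ℤ) : ℕ := P.support.sup fun i => (P.coeff i).natAbs

lemma coeff_natAbs_le (P : Polynomial ℤ) (i : ℕ) : (P.coeff i).natAbs ≤ polyHeight P := by
  by_cases h : i ∈ P.support
  · exact Finset.le_sup (f := fun i => (P.coeff i).natAbs) h
  · simp [Polynomial.notMem_support_iff.mp h]

lemma polyHeight_le {P : Polynomial ℤ} {m : ℕ} (h : ∀ i, (P.coeff i).natAbs ≤ m) :
    polyHeight P ≤ m := Finset.sup_le fun i _ => h i

lemma exists_polyHeight {P : Polynomial ℤ} (hP : P ≠ 0) :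
    ∃ i ∈ P.support, (P.coeff i).natAbs = polyHeight P := by
  obtain ⟨i, hi, h⟩ := Finset.exists_mem_eq_sup P.support
    (Polynomial.nonempty_support_iff.mpr hP) (fun i => (P.coeff i).natAbs)
  exact ⟨i, hi, h.symm⟩

lemma polyHeight_pos {P : Polynomial ℤ} (hP : P ≠ 0) : 0 < polyHeight P := by
  obtain ⟨i, hi, h⟩ := exists_polyHeight hP
  rw [← h]
  exact Int.natAbs_pos.mpr (Polynomial.mem_support_iff.mp hi)

lemma polyHeight_zero : polyHeight 0 = 0 := by simp [polyHeight]

lemma polyHeight_C (a : ℤ) : polyHeight (Polynomial.C a) = a.natAbs := by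
  by_cases h : a = 0
  · simp [h, polyHeight_zero]
  · apply le_antisymm
    · apply polyHeight_le
      intro i
      rcases eq_or_ne i 0 with rfl | hi
      · simp
      · rw [Polynomial.coeff_C, if_neg hi]
        simp
    · simpa using coeff_natAbs_le (Polynomial.C a) 0

lemma polyHeight_C_mul (a : ℤ) (Q : Polynomial ℤ) :
    polyHeight (Polynomial.C a * Q) = a.natAbs * polyHeight Q := by
  by_cases ha : a = 0
  · simp [ha, polyHeight_zero]
  by_cases hQ : Q = 0
  · simp [hQ, polyHeight_zero]
  apply le_antisymm
  · apply polyHeight_le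
    intro i
    rw [Polynomial.coeff_C_mul, Int.natAbs_mul]
    exact Nat.mul_le_mul_left _ (coeff_natAbs_le Q i)
  · obtain ⟨i, hi, h⟩ := exists_polyHeight hQ
    calc a.natAbs * polyHeight Q = ((Polynomial.C a * Q).coeff i).natAbs := by
          rw [Polynomial.coeff_C_mul, Int.natAbs_mul, h]
      _ ≤ _ := coeff_natAbs_le _ i

lemma natAbs_sum_le {α : Type*} (s : Finset α) (f : α → ℤ) :
    (∑ i ∈ s, f i).natAbs ≤ ∑ i ∈ s, (f i).natAbs := by
  classical
  induction s using Finset.cons_induction with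
  | empty => simp
  | cons a s ha ih =>
    rw [Finset.sum_cons, Finset.sum_cons]
    exact le_trans (Int.natAbs_add_le _ _) (Nat.add_le_add_left ih _)

/-- Elementary upper bound for the height of a product of two polynomials. -/
lemma polyHeight_mul_le (P Q : Polynomial ℤ) :
    polyHeight (P * Q) ≤ (P.natDegree + 1) * (polyHeight P * polyHeight Q) := by
  apply polyHeight_le
  intro k
  rw [Polynomial.coeff_mul]
  calc (∑ x ∈ antidiagonal k, P.coeff x.1 * Q.coeff x.2).natAbs
      ≤ ∑ x ∈ antidiagonal k, (P.coeff x.1 * Q.coeff x.2).natAbs := natAbs_sum_le _ _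
    _ ≤ ∑ x ∈ antidiagonal k, if x.1 ≤ P.natDegree then polyHeight P * polyHeight Q else 0 := by
        apply Finset.sum_le_sum
        intro x _
        by_cases hx : x.1 ≤ P.natDegree
        · rw [if_pos hx, Int.natAbs_mul]
          exact Nat.mul_le_mul (coeff_natAbs_le _ _) (coeff_natAbs_le _ _)
        · rw [if_neg hx, Polynomial.coeff_eq_zero_of_natDegree_lt (lt_of_not_ge hx)]
          simp
    _ = ((antidiagonal k).filter (fun x => x.1 ≤ P.natDegree)).card
          * (polyHeight P * polyHeight Q) := by
        rw [← Finset.sum_filter, Finset.sum_const, smul_eq_mul]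
    _ ≤ (P.natDegree + 1) * (polyHeight P * polyHeight Q) := by
        have hcard : ((antidiagonal k).filter (fun x => x.1 ≤ P.natDegree)).card
            ≤ P.natDegree + 1 := by
          have : ((antidiagonal k).filter (fun x => x.1 ≤ P.natDegree)).card
              ≤ (Finset.range (P.natDegree + 1)).card := by
            apply Finset.card_le_card_of_injOn (fun x => x.1)
            · intro x hx
              simp only [Finset.mem_coe, Finset.mem_filter] at hx
              simpa using Nat.lt_succ_of_le hx.2
            · intro x hx y hy hxy
              have h1 : x.1 = y.1 := hxy
              simp only [Finset.mem_coe, Finset.mem_filter, Finset.HasAntidiagonal.mem_antidiagonal] at hx hy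
              have : x.2 = y.2 := by omega
              exact Prod.ext h1 this
          simpa using this
        exact Nat.mul_le_mul_right _ hcard


noncomputable def toPoly (n : ℕ) (a : Fin (n+1) → ℝ) : Polynomial ℝ :=
  ∑ i, Polynomial.C (a i) * Polynomial.X ^ (i : ℕ)

lemma coeff_toPoly (n : ℕ) (a : Fin (n+1) → ℝ) (j : ℕ) :
    (toPoly n a).coeff j = if h : j < n+1 then a ⟨j, h⟩ else 0 := by
  rw [toPoly, Polynomial.finset_sum_coeff]
  simp only [Polynomial.coeff_C_mul, Polynomial.coeff_X_pow, mul_ite, mul_one, mul_zero]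
  by_cases h : j < n+1
  · rw [dif_pos h, Finset.sum_eq_single (⟨j, h⟩ : Fin (n+1))]
    · simp
    · intro b _ hb
      rw [if_neg]
      exact fun hc => hb (by ext; simp [← hc])
    · simp
  · rw [dif_neg h]
    apply Finset.sum_eq_zero
    intro i _
    rw [if_neg]
    exact fun hc => h (hc ▸ i.isLt)

lemma toPoly_smul (n : ℕ) (s : ℝ) (a : Fin (n+1) → ℝ) :
    toPoly n (s • a) = s • toPoly n a := by
  ext j
  simp [coeff_toPoly]

lemma toPoly_coeffs (n : ℕ) (R : Polynomial ℝ) (h : R.natDegree ≤ n) :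
    toPoly n (fun i => R.coeff i) = R := by
  ext j
  rw [coeff_toPoly]
  by_cases hj : j < n+1
  · rw [dif_pos hj]
  · rw [dif_neg hj]
    exact (Polynomial.coeff_eq_zero_of_natDegree_lt (by omega)).symm

lemma toPoly_ne_zero (n : ℕ) {a : Fin (n+1) → ℝ} (ha : a ≠ 0) : toPoly n a ≠ 0 := by
  intro h
  apply ha
  funext i
  have := congrArg (fun p => Polynomial.coeff p (i : ℕ)) h
  simp [coeff_toPoly] at this
  exact this (Nat.lt_succ_iff.mp i.isLt)

lemma cont_coeff (n j : ℕ) : Continuous fun a : Fin (n+1) → ℝ => (toPoly n a).coeff j := by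
  by_cases h : j < n+1
  · simp only [coeff_toPoly, dif_pos h]
    exact continuous_apply _
  · simp only [coeff_toPoly, dif_neg h]
    exact continuous_const

lemma cont_coeff_mul (n j : ℕ) :
    Continuous fun p : (Fin (n+1) → ℝ) × (Fin (n+1) → ℝ) =>
      (toPoly n p.1 * toPoly n p.2).coeff j := by
  simp only [Polynomial.coeff_mul]
  exact continuous_finset_sum _ fun x _ =>
    ((cont_coeff n x.1).comp continuous_fst).mul ((cont_coeff n x.2).comp continuous_snd)

/-- The key two-factor lower bound, by compactness. -/
lemma key_lower (n : ℕ) : ∃ c : ℝ, 0 < c ∧ c ≤ 1 ∧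
    ∀ P Q : Polynomial ℝ, P ≠ 0 → Q ≠ 0 → P.natDegree ≤ n → Q.natDegree ≤ n →
      (P * Q).natDegree ≤ n →
      c * (‖fun i : Fin (n+1) => P.coeff i‖ * ‖fun i : Fin (n+1) => Q.coeff i‖)
        ≤ ‖fun j : Fin (n+1) => (P * Q).coeff j‖ := by
  classical
  set V := (Fin (n+1) → ℝ)
  set F : V × V → ℝ := fun p => ‖fun j : Fin (n+1) => (toPoly n p.1 * toPoly n p.2).coeff j‖
    with hF
  have hFcont : Continuous F := by
    apply Continuous.norm
    exact continuous_pi fun j => cont_coeff_mul n j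
  set K : Set (V × V) := {p | ‖p.1‖ = 1 ∧ ‖p.2‖ = 1 ∧
      ∀ j : ℕ, n < j → (toPoly n p.1 * toPoly n p.2).coeff j = 0} with hK
  have hKclosed : IsClosed K := by
    have hKeq : K = {p : V × V | ‖p.1‖ = 1} ∩ ({p : V × V | ‖p.2‖ = 1} ∩
        ⋂ j : ℕ, {p : V × V | n < j → (toPoly n p.1 * toPoly n p.2).coeff j = 0}) := by
      ext p
      simp [hK, Set.mem_iInter]
    rw [hKeq]
    refine IsClosed.inter (isClosed_eq continuous_fst.norm continuous_const) ?_
    refine IsClosed.inter (isClosed_eq continuous_snd.norm continuous_const) ?_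
    apply isClosed_iInter
    intro j
    by_cases h : n < j
    · simp only [h, forall_true_left]
      exact isClosed_eq (cont_coeff_mul n j) continuous_const
    · have : {p : V × V | n < j → (toPoly n p.1 * toPoly n p.2).coeff j = 0} = Set.univ := by
        ext p; simp [h]
      rw [this]
      exact isClosed_univ
  have hKcompact : IsCompact K := by
    apply (isCompact_closedBall (0 : V × V) 1).of_isClosed_subset hKclosed
    intro p hp
    rw [mem_closedBall_zero_iff, Prod.norm_def]
    exact max_le (le_of_eq hp.1) (le_of_eq hp.2.1)
  -- the point (e, e) with e the coefficient vector of the constant polynomial 1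
  set e : V := fun i => if i = 0 then 1 else 0 with he
  have htoe : toPoly n e = 1 := by
    ext j
    rw [coeff_toPoly, Polynomial.coeff_one]
    by_cases h : j < n+1
    · rw [dif_pos h, he]
      by_cases hj : j = 0
      · subst hj; simp
      · rw [if_neg hj]
        show (if (⟨j, h⟩ : Fin (n+1)) = 0 then (1:ℝ) else 0) = 0
        rw [if_neg (fun hc => hj (by simpa using congrArg Fin.val hc))]
    · rw [dif_neg h, if_neg (by omega)]
  have hne : ‖e‖ = 1 := by
    apply le_antisymm
    · rw [pi_norm_le_iff_of_nonneg zero_le_one]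
      intro i
      rw [he]
      by_cases hi : i = 0 <;> simp [hi]
    · have h0 : ‖e 0‖ ≤ ‖e‖ := norm_le_pi_norm e 0
      have he0 : e 0 = 1 := by rw [he]; simp
      rwa [he0, norm_one] at h0
  have heK : (e, e) ∈ K := by
    refine ⟨hne, hne, fun j hj => ?_⟩
    simp only [htoe, one_mul, Polynomial.coeff_one]
    rw [if_neg (by omega)]
  obtain ⟨p₀, hp₀K, hmin⟩ := hKcompact.exists_isMinOn ⟨(e, e), heK⟩ hFcont.continuousOn
  rw [isMinOn_iff] at hmin
  obtain ⟨hpa, hpb, hpc⟩ := hp₀K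
  have hFpos : 0 < F p₀ := by
    have h1 : p₀.1 ≠ 0 := by
      intro h; rw [h, norm_zero] at hpa; exact one_ne_zero hpa.symm
    have h2 : p₀.2 ≠ 0 := by
      intro h; rw [h, norm_zero] at hpb; exact one_ne_zero hpb.symm
    have hR : toPoly n p₀.1 * toPoly n p₀.2 ≠ 0 :=
      mul_ne_zero (toPoly_ne_zero n h1) (toPoly_ne_zero n h2)
    have hdeg : (toPoly n p₀.1 * toPoly n p₀.2).natDegree ≤ n :=
      Polynomial.natDegree_le_iff_coeff_eq_zero.mpr hpc
    set d := (toPoly n p₀.1 * toPoly n p₀.2).natDegree with hd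
    have hlc : (toPoly n p₀.1 * toPoly n p₀.2).coeff d ≠ 0 := by
      rw [hd]
      exact Polynomial.leadingCoeff_ne_zero.mpr hR
    calc (0:ℝ) < ‖(toPoly n p₀.1 * toPoly n p₀.2).coeff d‖ := by
          simpa using hlc
      _ ≤ F p₀ := by
          have := norm_le_pi_norm
            (fun j : Fin (n+1) => (toPoly n p₀.1 * toPoly n p₀.2).coeff j) ⟨d, by omega⟩
          simpa [hF] using this
  refine ⟨min (F p₀) 1, lt_min hFpos one_pos, min_le_right _ _, ?_⟩
  intro P Q hP hQ hPn hQn hPQn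
  set vP : V := fun i : Fin (n+1) => P.coeff i with hvP
  set vQ : V := fun i : Fin (n+1) => Q.coeff i with hvQ
  set vR : V := fun j : Fin (n+1) => (P * Q).coeff j with hvR
  have hvPne : vP ≠ 0 := by
    intro h
    apply Polynomial.leadingCoeff_ne_zero.mpr hP
    have h2 := congrFun h (⟨P.natDegree, Nat.lt_succ_of_le hPn⟩ : Fin (n+1))
    rw [hvP] at h2
    exact h2
  have hvQne : vQ ≠ 0 := by
    intro h
    apply Polynomial.leadingCoeff_ne_zero.mpr hQ
    have h2 := congrFun h (⟨Q.natDegree, Nat.lt_succ_of_le hQn⟩ : Fin (n+1))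
    rw [hvQ] at h2
    exact h2
  have hnP : (0:ℝ) < ‖vP‖ := norm_pos_iff.mpr hvPne
  have hnQ : (0:ℝ) < ‖vQ‖ := norm_pos_iff.mpr hvQne
  set a : V := ‖vP‖⁻¹ • vP with ha
  set b : V := ‖vQ‖⁻¹ • vQ with hb
  have hna : ‖a‖ = 1 := by
    rw [ha, norm_smul, norm_inv, norm_norm, inv_mul_cancel₀ (ne_of_gt hnP)]
  have hnb : ‖b‖ = 1 := by
    rw [hb, norm_smul, norm_inv, norm_norm, inv_mul_cancel₀ (ne_of_gt hnQ)]
  have htpa : toPoly n a = ‖vP‖⁻¹ • P := by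
    rw [ha, toPoly_smul, hvP, toPoly_coeffs n P hPn]
  have htpb : toPoly n b = ‖vQ‖⁻¹ • Q := by
    rw [hb, toPoly_smul, hvQ, toPoly_coeffs n Q hQn]
  have hprod : toPoly n a * toPoly n b = (‖vP‖⁻¹ * ‖vQ‖⁻¹) • (P * Q) := by
    rw [htpa, htpb, smul_mul_smul_comm]
  have habK : (a, b) ∈ K := by
    refine ⟨hna, hnb, fun j hj => ?_⟩
    rw [hprod, Polynomial.coeff_smul, Polynomial.coeff_eq_zero_of_natDegree_lt (by omega),
      smul_zero]
  have hFab : F (a, b) = (‖vP‖⁻¹ * ‖vQ‖⁻¹) * ‖vR‖ := by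
    have : (fun j : Fin (n+1) => (toPoly n a * toPoly n b).coeff j)
        = (‖vP‖⁻¹ * ‖vQ‖⁻¹) • vR := by
      funext j
      rw [hprod, Polynomial.coeff_smul]
      rfl
    rw [hF]
    simp only [this, norm_smul, norm_mul, norm_inv, norm_norm]
  have hle : F p₀ ≤ (‖vP‖⁻¹ * ‖vQ‖⁻¹) * ‖vR‖ := hFab ▸ hmin (a, b) habK
  calc min (F p₀) 1 * (‖vP‖ * ‖vQ‖) ≤ ((‖vP‖⁻¹ * ‖vQ‖⁻¹) * ‖vR‖) * (‖vP‖ * ‖vQ‖) := by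
        apply mul_le_mul_of_nonneg_right ((min_le_left _ _).trans hle)
        positivity
    _ = ‖vR‖ := by
        field_simp

lemma polyHeight_one : polyHeight 1 = 1 := by simpa using polyHeight_C 1

lemma norm_coeffvec (n : ℕ) (R : Polynomial ℤ) (h : R.natDegree ≤ n) :
    ‖fun i : Fin (n+1) => ((R.coeff i : ℤ) : ℝ)‖ = (polyHeight R : ℝ) := by
  have hnorm : ∀ m : ℤ, ‖(m : ℝ)‖ = (m.natAbs : ℝ) := by
    intro m
    rw [Real.norm_eq_abs, ← Int.cast_abs, Int.abs_eq_natAbs, Int.cast_natCast]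
  by_cases hR : R = 0
  · subst hR
    simp [polyHeight_zero]
  · apply le_antisymm
    · rw [pi_norm_le_iff_of_nonneg (Nat.cast_nonneg _)]
      intro i
      rw [hnorm]
      exact_mod_cast coeff_natAbs_le R i
    · obtain ⟨i, hi, hh⟩ := exists_polyHeight hR
      have hile : i ≤ n := le_trans (Polynomial.le_natDegree_of_mem_supp i hi) h
      have := norm_le_pi_norm (fun i : Fin (n+1) => ((R.coeff i : ℤ) : ℝ))
        ⟨i, Nat.lt_succ_of_le hile⟩
      rw [← hh, ← hnorm]
      exact this

lemma key_lower_int (n : ℕ) : ∃ c : ℝ, 0 < c ∧ c ≤ 1 ∧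
    ∀ P Q : Polynomial ℤ, P ≠ 0 → Q ≠ 0 → (P * Q).natDegree ≤ n →
      c * ((polyHeight P : ℝ) * (polyHeight Q : ℝ)) ≤ (polyHeight (P * Q) : ℝ) := by
  obtain ⟨c, hc0, hc1, hkey⟩ := key_lower n
  refine ⟨c, hc0, hc1, ?_⟩
  intro P Q hP hQ hn
  have hPQ : P * Q ≠ 0 := mul_ne_zero hP hQ
  have hPn : P.natDegree ≤ n := le_trans (Polynomial.natDegree_le_of_dvd ⟨Q, rfl⟩ hPQ) hn
  have hQn : Q.natDegree ≤ n := le_trans (Polynomial.natDegree_le_of_dvd ⟨P, mul_comm P Q⟩ hPQ) hn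
  set f := Int.castRingHom ℝ with hf
  have hinj : Function.Injective f := Int.cast_injective
  have hPm : P.map f ≠ 0 := (Polynomial.map_ne_zero_iff hinj).mpr hP
  have hQm : Q.map f ≠ 0 := (Polynomial.map_ne_zero_iff hinj).mpr hQ
  have hPmn : (P.map f).natDegree ≤ n := le_trans Polynomial.natDegree_map_le hPn
  have hQmn : (Q.map f).natDegree ≤ n := le_trans Polynomial.natDegree_map_le hQn
  have hmulm : P.map f * Q.map f = (P * Q).map f := (Polynomial.map_mul f).symm
  have hPQmn : (P.map f * Q.map f).natDegree ≤ n := by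
    rw [hmulm]
    exact le_trans Polynomial.natDegree_map_le hn
  have h := hkey (P.map f) (Q.map f) hPm hQm hPmn hQmn hPQmn
  have e1 : (fun i : Fin (n+1) => (P.map f).coeff i) = fun i : Fin (n+1) => ((P.coeff i : ℤ) : ℝ) := by
    funext i; rw [Polynomial.coeff_map]; rfl
  have e2 : (fun i : Fin (n+1) => (Q.map f).coeff i) = fun i : Fin (n+1) => ((Q.coeff i : ℤ) : ℝ) := by
    funext i; rw [Polynomial.coeff_map]; rfl
  have e3 : (fun j : Fin (n+1) => (P.map f * Q.map f).coeff j)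
      = fun j : Fin (n+1) => (((P * Q).coeff j : ℤ) : ℝ) := by
    funext j; rw [hmulm, Polynomial.coeff_map]; rfl
  rw [e1, e2, e3, norm_coeffvec n P hPn, norm_coeffvec n Q hQn, norm_coeffvec n (P * Q) hn] at h
  exact h

set_option maxHeartbeats 2000000 in
lemma lower_ind (n : ℕ) (c : ℝ) (hc0 : 0 < c) (hc1 : c ≤ 1)
    (hkey : ∀ P Q : Polynomial ℤ, P ≠ 0 → Q ≠ 0 → (P * Q).natDegree ≤ n →
      c * ((polyHeight P : ℝ) * (polyHeight Q : ℝ)) ≤ (polyHeight (P * Q) : ℝ)) :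
    ∀ (k : ℕ) (P : Fin k → Polynomial ℤ), (∀ i, P i ≠ 0) → (∏ i, P i).natDegree ≤ n →
      c ^ (∏ i, P i).natDegree * ∏ i, (polyHeight (P i) : ℝ) ≤ (polyHeight (∏ i, P i) : ℝ) := by
  intro k
  induction k with
  | zero => intro P _ _; simp [polyHeight_one]
  | succ k ih =>
    intro P hPne hdeg
    have h0 : P 0 ≠ 0 := hPne 0
    rw [Fin.prod_univ_succ] at hdeg ⊢
    rw [Fin.prod_univ_succ]
    obtain ⟨T, hTdef⟩ : ∃ T, T = ∏ i : Fin k, P i.succ := ⟨_, rfl⟩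
    rw [← hTdef] at hdeg ⊢
    have hT : T ≠ 0 := by
      rw [hTdef]
      exact Finset.prod_ne_zero_iff.mpr fun i _ => hPne i.succ
    have hdmul : (P 0 * T).natDegree = (P 0).natDegree + T.natDegree :=
      Polynomial.natDegree_mul h0 hT
    have hTn : T.natDegree ≤ n := by omega
    have ihT : c ^ T.natDegree * ∏ i : Fin k, (polyHeight (P i.succ) : ℝ)
        ≤ (polyHeight T : ℝ) := by
      rw [hTdef]
      exact ih (fun i => P i.succ) (fun i => hPne i.succ) (hTdef ▸ hTn)
    have hprodnn : (0:ℝ) ≤ ∏ i : Fin k, (polyHeight (P i.succ) : ℝ) :=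
      Finset.prod_nonneg fun i _ => Nat.cast_nonneg _
    by_cases hd0 : (P 0).natDegree = 0
    · obtain ⟨a, haC⟩ := Polynomial.natDegree_eq_zero.mp hd0
      have hH : (polyHeight (P 0 * T) : ℝ) = (a.natAbs : ℝ) * (polyHeight T : ℝ) := by
        rw [← haC, polyHeight_C_mul]; push_cast; ring
      have hHP0 : (polyHeight (P 0) : ℝ) = (a.natAbs : ℝ) := by rw [← haC, polyHeight_C]
      calc c ^ (P 0 * T).natDegree * ((polyHeight (P 0) : ℝ) * ∏ i : Fin k, (polyHeight (P i.succ) : ℝ))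
          = (a.natAbs : ℝ) * (c ^ T.natDegree * ∏ i : Fin k, (polyHeight (P i.succ) : ℝ)) := by
            rw [hdmul, hd0, zero_add, hHP0]; ring
        _ ≤ (a.natAbs : ℝ) * (polyHeight T : ℝ) :=
            mul_le_mul_of_nonneg_left ihT (Nat.cast_nonneg _)
        _ = (polyHeight (P 0 * T) : ℝ) := hH.symm
    · have hkeyPT := hkey (P 0) T h0 hT hdeg
      calc c ^ (P 0 * T).natDegree * ((polyHeight (P 0) : ℝ) * ∏ i : Fin k, (polyHeight (P i.succ) : ℝ))
          ≤ c ^ (1 + T.natDegree) * ((polyHeight (P 0) : ℝ) * ∏ i : Fin k, (polyHeight (P i.succ) : ℝ)) := by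
            apply mul_le_mul_of_nonneg_right
              (pow_le_pow_of_le_one hc0.le hc1 (by omega))
            positivity
        _ = c * ((polyHeight (P 0) : ℝ) * (c ^ T.natDegree * ∏ i : Fin k, (polyHeight (P i.succ) : ℝ))) := by
            ring
        _ ≤ c * ((polyHeight (P 0) : ℝ) * (polyHeight T : ℝ)) := by
            apply mul_le_mul_of_nonneg_left
              (mul_le_mul_of_nonneg_left ihT (Nat.cast_nonneg _)) hc0.le
        _ ≤ (polyHeight (P 0 * T) : ℝ) := hkeyPT

lemma upper_ind (n : ℕ) :
    ∀ (k : ℕ) (P : Fin k → Polynomial ℤ), (∀ i, P i ≠ 0) → (∏ i, P i).natDegree ≤ n →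
      polyHeight (∏ i, P i) ≤ (n+1) ^ (∏ i, P i).natDegree * ∏ i, polyHeight (P i) := by
  intro k
  induction k with
  | zero => intro P _ _; simp [polyHeight_one]
  | succ k ih =>
    intro P hPne hdeg
    have h0 : P 0 ≠ 0 := hPne 0
    rw [Fin.prod_univ_succ] at hdeg ⊢
    rw [Fin.prod_univ_succ]
    obtain ⟨T, hTdef⟩ : ∃ T, T = ∏ i : Fin k, P i.succ := ⟨_, rfl⟩
    rw [← hTdef] at hdeg ⊢
    have hT : T ≠ 0 := by
      rw [hTdef]
      exact Finset.prod_ne_zero_iff.mpr fun i _ => hPne i.succ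
    have hdmul : (P 0 * T).natDegree = (P 0).natDegree + T.natDegree :=
      Polynomial.natDegree_mul h0 hT
    have hTn : T.natDegree ≤ n := by omega
    have hd0n : (P 0).natDegree ≤ n := by omega
    have ihT : polyHeight T ≤ (n+1) ^ T.natDegree * ∏ i : Fin k, polyHeight (P i.succ) := by
      rw [hTdef]
      exact ih (fun i => P i.succ) (fun i => hPne i.succ) (hTdef ▸ hTn)
    have hd01 : (P 0).natDegree + 1 ≤ (n+1) ^ (P 0).natDegree := by
      rcases Nat.eq_zero_or_pos (P 0).natDegree with h | h
      · simp [h]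
      · calc (P 0).natDegree + 1 ≤ n + 1 := by omega
          _ ≤ (n+1) ^ (P 0).natDegree := Nat.le_self_pow (by omega) _
    calc polyHeight (P 0 * T)
        ≤ ((P 0).natDegree + 1) * (polyHeight (P 0) * polyHeight T) := polyHeight_mul_le _ _
      _ ≤ ((P 0).natDegree + 1) * (polyHeight (P 0) * ((n+1) ^ T.natDegree * ∏ i : Fin k, polyHeight (P i.succ))) := by
          exact Nat.mul_le_mul_left _ (Nat.mul_le_mul_left _ ihT)
      _ ≤ (n+1) ^ (P 0).natDegree * (polyHeight (P 0) * ((n+1) ^ T.natDegree * ∏ i : Fin k, polyHeight (P i.succ))) :=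
          Nat.mul_le_mul_right _ hd01
      _ = (n+1) ^ (P 0 * T).natDegree * (polyHeight (P 0) * ∏ i : Fin k, polyHeight (P i.succ)) := by
          rw [hdmul, pow_add]; ring

theorem stmt_11 (n : ℕ) (hn : 0 < n) :
    ∃ c₁ c₂ : ℝ, 0 < c₁ ∧ 0 < c₂ ∧
      ∀ (k : ℕ) (P : Fin k → Polynomial ℤ), (∀ i, P i ≠ 0) →
        (∏ i, P i).natDegree ≤ n →
        c₁ * ∏ i, (polyHeight (P i) : ℝ) ≤ (polyHeight (∏ i, P i) : ℝ) ∧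
        (polyHeight (∏ i, P i) : ℝ) ≤ c₂ * ∏ i, (polyHeight (P i) : ℝ) := by
  obtain ⟨c, hc0, hc1, hkey⟩ := key_lower_int n
  refine ⟨c ^ n, ((n:ℝ)+1) ^ n, pow_pos hc0 n, by positivity, ?_⟩
  intro k P hPne hdeg
  have hprodnn : (0:ℝ) ≤ ∏ i : Fin k, (polyHeight (P i) : ℝ) :=
    Finset.prod_nonneg fun i _ => Nat.cast_nonneg _
  constructor
  · calc c ^ n * ∏ i, (polyHeight (P i) : ℝ)
        ≤ c ^ (∏ i, P i).natDegree * ∏ i, (polyHeight (P i) : ℝ) :=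
          mul_le_mul_of_nonneg_right (pow_le_pow_of_le_one hc0.le hc1 hdeg) hprodnn
      _ ≤ (polyHeight (∏ i, P i) : ℝ) := lower_ind n c hc0 hc1 hkey k P hPne hdeg
  · have h := upper_ind n k P hPne hdeg
    calc (polyHeight (∏ i, P i) : ℝ)
        ≤ (((n+1) ^ (∏ i, P i).natDegree * ∏ i, polyHeight (P i) : ℕ) : ℝ) := Nat.cast_le.mpr h
      _ = ((n:ℝ)+1) ^ (∏ i, P i).natDegree * ∏ i, (polyHeight (P i) : ℝ) := by push_cast; ring
      _ ≤ ((n:ℝ)+1) ^ n * ∏ i, (polyHeight (P i) : ℝ) := by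
          apply mul_le_mul_of_nonneg_right _ hprodnn
          exact pow_le_pow_right₀ (by linarith [Nat.cast_nonneg (α := ℝ) n]) hdeg
end
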